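/- With the notation of the previous statement, the leapfrog iteration exactly conserves the modified energy: for all n ∈ ℕ, if (q_n, p_n) = Mⁿ (q_0, p_0), then q_n²/(2λ̂²) + p_n²/2 = q_0²/(2λ̂²) + p_0²/2. -/

import Mathlib

open Matrix

/-- The leapfrog rotation exactly conserves the modified energy. -/
theorem stmt_11 (lamhat φ : ℝ) (hlamhat : 0 < lamhat) (hφ : φ ∈ Set.Ioo 0 Real.pi)
    (M : Matrix (Fin 2) (Fin 2) ℝ)
    (hM : M = !![Real.cos φ, lamhat * Real.sin φ;
                 -(1/lamhat) * Real.sin φ, Real.cos φ])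
    (q0 p0 : ℝ) (n : ℕ) :
    ((M ^ n) *ᵥ ![q0, p0]) 0 ^ 2 / (2 * lamhat^2) + ((M ^ n) *ᵥ ![q0, p0]) 1 ^ 2 / 2
      = q0^2 / (2 * lamhat^2) + p0^2 / 2 := by
  induction n with
  | zero => simp
  | succ n ih =>
    have hstep : ∀ v : Fin 2 → ℝ,
        (M *ᵥ v) 0 ^ 2 / (2 * lamhat^2) + (M *ᵥ v) 1 ^ 2 / 2
          = v 0 ^ 2 / (2 * lamhat^2) + v 1 ^ 2 / 2 := by
      intro v
      subst hM
      have hpyth := Real.sin_sq_add_cos_sq φ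
      simp [mulVec, dotProduct, Fin.sum_univ_succ]
      field_simp
      linear_combination (v 0 ^ 2 + lamhat ^ 2 * v 1 ^ 2) * hpyth
    have h : (M ^ (n+1)) *ᵥ ![q0, p0] = M *ᵥ ((M ^ n) *ᵥ ![q0, p0]) := by
      rw [pow_succ', mulVec_mulVec]
    rw [h, hstep]
    exact ih
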